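/- Let D be the algebra of operators on K[x] generated by x (left multiplication), ∂ (ordinary differentiation's q-analogue with q = 1, i.e. x^n ↦ n x^{n-1}), ∂₁ (x^n ↦ [n]_q x^{n-1}) and ∂₋₁ (x^n ↦ [n]_{q^{-1}} x^{n-1}), where q ∈ K is transcendental over ℚ. Then the operators satisfy ∂₋₁ ∂ ∂₁ = q² ∂₁ ∂ ∂₋₁ as endomorphisms of K[x]. -/
import Mathlib


open Polynomial

set_option maxHeartbeats 1000000 in
/-- For the quantum differential operators `∂, ∂₁, ∂₋₁` on `K[x]` one has
`∂₋₁ ∂ ∂₁ = q² ∂₁ ∂ ∂₋₁`. -/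
theorem stmt7 {K : Type*} [Field K] [CharZero K] (q : K) (hq : Transcendental ℚ q)
    (D D1 Dm1 : Module.End K (Polynomial K))
    (hD : ∀ n : ℕ, D (X ^ n) = (n : K) • X ^ (n - 1))
    (hD1 : ∀ n : ℕ, D1 (X ^ n) = (∑ i ∈ Finset.range n, q ^ i) • X ^ (n - 1))
    (hDm1 : ∀ n : ℕ, Dm1 (X ^ n) = (∑ i ∈ Finset.range n, (q⁻¹) ^ i) • X ^ (n - 1)) :
    Dm1 * D * D1 = (q ^ 2) • (D1 * D * Dm1) := by
  have hq0 : q ≠ 0 := by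
    intro h; exact hq (h ▸ isAlgebraic_zero)
  have hq1 : q ≠ 1 := by
    intro h; exact hq (h ▸ isAlgebraic_one)
  have hqi1 : q⁻¹ ≠ 1 := fun h => hq1 (inv_eq_one.mp h)
  have sum_inv : ∀ k : ℕ, (∑ i ∈ Finset.range k, q⁻¹ ^ i) =
      (q ^ (k - 1))⁻¹ * ∑ i ∈ Finset.range k, q ^ i := by
    intro k
    match k with
    | 0 => simp
    | (j + 1) =>
      rw [show j + 1 - 1 = j from rfl,
        ← Finset.sum_range_reflect (fun i => q⁻¹ ^ i) (j + 1), Finset.mul_sum]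
      refine Finset.sum_congr rfl fun i hi => ?_
      have hij : i ≤ j := Nat.lt_succ_iff.mp (Finset.mem_range.mp hi)
      rw [show j + 1 - 1 - i = j - i from rfl, inv_pow, pow_sub₀ q hq0 hij, mul_inv, inv_inv, mul_comm]
  have scalar : ∀ n : ℕ,
      (∑ i ∈ Finset.range n, q ^ i) * ((n - 1 : ℕ) : K) *
        (∑ i ∈ Finset.range (n - 1 - 1), q⁻¹ ^ i) =
      q ^ 2 * ((∑ i ∈ Finset.range n, q⁻¹ ^ i) * ((n - 1 : ℕ) : K) *
        (∑ i ∈ Finset.range (n - 1 - 1), q ^ i)) := by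
    intro n
    match n with
    | 0 => simp
    | 1 => simp
    | 2 => simp
    | (m + 3) =>
      rw [show m + 3 - 1 - 1 = m + 1 from rfl, show m + 3 - 1 = m + 2 from rfl,
        sum_inv (m + 3), sum_inv (m + 1), show m + 3 - 1 = m + 2 from rfl,
        show m + 1 - 1 = m from rfl]
      have h3 : q ^ m ≠ 0 := pow_ne_zero _ hq0
      have h4 : q ^ (m + 2) ≠ 0 := pow_ne_zero _ hq0
      field_simp
      ring
  have key : ∀ n : ℕ, Dm1 (D (D1 (X ^ n))) = q ^ 2 • (D1 (D (Dm1 (X ^ n)))) := by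
    intro n
    simp only [hD1, hD, hDm1, map_smul, smul_smul]
    congr 1
    exact scalar n
  apply Polynomial.lhom_ext'
  intro n
  apply LinearMap.ext
  intro a
  simp only [LinearMap.coe_comp, Function.comp_apply, LinearMap.smul_apply,
    Module.End.mul_apply]
  rw [← smul_X_eq_monomial, map_smul, map_smul, map_smul, map_smul, map_smul, map_smul,
    key n, smul_comm]
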